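/- Let a, b, c, k, α > 0 be constants with α ≤ 1, let G be an n-vertex connected weighted graph, and let p* be a parameter. Fix an error function β(·,·) on vertex pairs. Suppose that: (i) for every set 𝒫 of vertex pairs with |𝒫| ≤ p*, there exists a subgraph on at most K·n^a edges (K a constant) with d_H(s,t) ≤ d_G(s,t) + β(s,t) for all (s,t) ∈ 𝒫; and (ii) for every set 𝒫 with |𝒫| ≥ p*, there exists a subgraph on at most k·n^b·|𝒫|^c edges in which at least α·|𝒫| of the pairs (s,t) ∈ 𝒫 satisfy d_H(s,t) ≤ d_G(s,t) + β(s,t). Then for every set 𝒫 of vertex pairs there exists a subgraph H of G on at most C·(n^a + n^b·|𝒫|^c) edges (C a constant depending only on a,b,c,k,α,K) with d_H(s,t) ≤ d_G(s,t) + β(s,t) for all (s,t) ∈ 𝒫. -/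

import Mathlib

open scoped ENNReal Classical

/-- The total weight of a walk: the sum of the weights of its edges. -/
noncomputable def walkWeight {V : Type} (G : SimpleGraph V) (w : Sym2 V → ℝ≥0∞)
    {s t : V} (p : G.Walk s t) : ℝ≥0∞ :=
  (p.edges.map w).sum

/-- Shortest-path distance in the weighted graph `(G, w)`, equal to `⊤` if there is no path. -/
noncomputable def gdist {V : Type} (G : SimpleGraph V) (w : Sym2 V → ℝ≥0∞)
    (s t : V) : ℝ≥0∞ :=
  ⨅ p : G.Walk s t, walkWeight G w p

/-- The maximum edge weight along a walk (0 for the trivial walk). -/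
noncomputable def maxEdge {V : Type} (G : SimpleGraph V) (w : Sym2 V → ℝ≥0∞)
    {s t : V} (p : G.Walk s t) : ℝ≥0∞ :=
  (p.edges.map w).foldr max 0

/-- `π` assigns to each ordered vertex pair a shortest path: a walk whose total
weight equals the shortest-path distance. -/
def IsShortestPathScheme {V : Type} (G : SimpleGraph V) (w : Sym2 V → ℝ≥0∞)
    (π : (s t : V) → G.Walk s t) : Prop :=
  ∀ s t : V, walkWeight G w (π s t) = gdist G w s t

/-- The edge weights are positive and finite on all edges of `G`. -/
def PosWeights {V : Type} (G : SimpleGraph V) (w : Sym2 V → ℝ≥0∞) : Prop :=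
  ∀ e ∈ G.edgeSet, 0 < w e ∧ w e ≠ ⊤

lemma gdist_anti {V : Type} {G G' : SimpleGraph V} (w : Sym2 V → ℝ≥0∞)
    (h : G ≤ G') (s t : V) : gdist G' w s t ≤ gdist G w s t := by
  refine le_iInf fun p => ?_
  refine le_trans (iInf_le _ (p.mapLe h)) ?_
  unfold walkWeight
  rw [SimpleGraph.Walk.mapLe, SimpleGraph.Walk.edges_map, List.map_map]
  have : (w ∘ Sym2.map ⇑(SimpleGraph.Hom.ofLE h)) = w := by
    funext e
    refine Sym2.ind (fun x y => ?_) e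
    rfl
  rw [this]

set_option maxHeartbeats 1000000 in
/-- The slack lemma: if (i) every set of at most `p*` vertex pairs admits a
pairwise `+β(·,·)` spanner on at most `K·n^a` edges, and (ii) every set `𝒫` of at least `p*`
vertex pairs admits a subgraph on at most `k·n^b·|𝒫|^c` edges satisfying at least `α·|𝒫|` of
the pairs, then every set `𝒫` of vertex pairs admits a pairwise `+β(·,·)` spanner on at most
`C·(n^a + n^b·|𝒫|^c)` edges, where `C` depends only on `a, b, c, k, α, K`. -/
theorem slack_to_pairwise_spanner
    (a b c k α K : ℝ) (ha : 0 < a) (hb : 0 < b) (hc : 0 < c) (hk : 0 < k)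
    (hα : 0 < α) (hα1 : α ≤ 1) (hK : 0 < K) :
    ∃ C : ℝ, 0 < C ∧
      ∀ (V : Type) [Fintype V] (G : SimpleGraph V) (w : Sym2 V → ℝ≥0∞),
        G.Connected → PosWeights G w →
        ∀ (β : V → V → ℝ≥0∞) (pstar : ℕ),
          (∀ P : Set (V × V), P.ncard ≤ pstar →
            ∃ H : SimpleGraph V, H ≤ G ∧
              (H.edgeSet.ncard : ℝ) ≤ K * (Fintype.card V : ℝ) ^ a ∧
              ∀ s t : V, (s, t) ∈ P → gdist H w s t ≤ gdist G w s t + β s t) →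
          (∀ P : Set (V × V), pstar ≤ P.ncard →
            ∃ H : SimpleGraph V, H ≤ G ∧
              (H.edgeSet.ncard : ℝ) ≤
                k * (Fintype.card V : ℝ) ^ b * (P.ncard : ℝ) ^ c ∧
              α * (P.ncard : ℝ) ≤
                (({p ∈ P | gdist H w p.1 p.2 ≤ gdist G w p.1 p.2 + β p.1 p.2}).ncard : ℝ)) →
          ∀ P : Set (V × V),
            ∃ H : SimpleGraph V, H ≤ G ∧
              (H.edgeSet.ncard : ℝ) ≤
                C * ((Fintype.card V : ℝ) ^ a +
                  (Fintype.card V : ℝ) ^ b * (P.ncard : ℝ) ^ c) ∧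
              ∀ s t : V, (s, t) ∈ P → gdist H w s t ≤ gdist G w s t + β s t := by
  set ρ : ℝ := (1 - α) ^ c with hρdef
  have hρ0 : 0 ≤ ρ := Real.rpow_nonneg (by linarith) c
  have hρ1 : ρ < 1 := by
    rcases lt_or_eq_of_le hα1 with h | h
    · exact Real.rpow_lt_one (by linarith) (by linarith) hc
    · rw [hρdef, h]
      simp [Real.zero_rpow hc.ne']
  set δ : ℝ := 1 - ρ with hδdef
  have hδ0 : 0 < δ := by linarith
  refine ⟨K + k / δ, by positivity, ?_⟩
  intro V _ G w hconn hpos β pstar h1 h2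
  set N : ℝ := (Fintype.card V : ℝ) with hN
  have hNa : 0 ≤ N ^ a := Real.rpow_nonneg (by positivity) a
  have hNb : 0 ≤ N ^ b := Real.rpow_nonneg (by positivity) b
  -- main claim by strong induction on the cardinality of P
  have main : ∀ m : ℕ, ∀ P : Set (V × V), P.ncard ≤ m →
      ∃ H : SimpleGraph V, H ≤ G ∧
        (H.edgeSet.ncard : ℝ) ≤ K * N ^ a + (k / δ) * N ^ b * (P.ncard : ℝ) ^ c ∧
        ∀ s t : V, (s, t) ∈ P → gdist H w s t ≤ gdist G w s t + β s t := by
    intro m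
    induction m with
    | zero =>
      intro P hP
      obtain ⟨H, hHG, hHe, hHs⟩ := h1 P (le_trans hP (Nat.zero_le _))
      refine ⟨H, hHG, ?_, hHs⟩
      have : 0 ≤ (k / δ) * N ^ b * (P.ncard : ℝ) ^ c := by positivity
      linarith
    | succ m ih =>
      intro P hP
      by_cases hsmall : P.ncard ≤ pstar
      · obtain ⟨H, hHG, hHe, hHs⟩ := h1 P hsmall
        refine ⟨H, hHG, ?_, hHs⟩
        have : 0 ≤ (k / δ) * N ^ b * (P.ncard : ℝ) ^ c := by positivity
        linarith
      · push_neg at hsmall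
        obtain ⟨H1, hH1G, hH1e, hH1s⟩ := h2 P hsmall.le
        set S : Set (V × V) :=
          {p ∈ P | gdist H1 w p.1 p.2 ≤ gdist G w p.1 p.2 + β p.1 p.2} with hSdef
        have hSP : S ⊆ P := fun p hp => hp.1
        have hPfin : P.Finite := Set.toFinite P
        have hPpos : 1 ≤ P.ncard := Nat.one_le_iff_ne_zero.mpr (by omega)
        have hSpos : 0 < (S.ncard : ℝ) := by
          have : 0 < α * (P.ncard : ℝ) := by
            have : (0:ℝ) < (P.ncard : ℝ) := by exact_mod_cast hPpos
            positivity
          linarith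
        have hSpos' : 1 ≤ S.ncard := by exact_mod_cast hSpos
        set U : Set (V × V) := P \ S with hUdef
        have hUcard : U.ncard = P.ncard - S.ncard := Set.ncard_diff hSP (Set.toFinite _)
        have hSle : S.ncard ≤ P.ncard := Set.ncard_le_ncard hSP hPfin
        have hUlt : U.ncard ≤ m := by omega
        obtain ⟨H2, hH2G, hH2e, hH2s⟩ := ih U hUlt
        refine ⟨H1 ⊔ H2, sup_le hH1G hH2G, ?_, ?_⟩
        · -- edge count
          have hcount : ((H1 ⊔ H2).edgeSet.ncard : ℝ) ≤
              (H1.edgeSet.ncard : ℝ) + (H2.edgeSet.ncard : ℝ) := by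
            rw [SimpleGraph.edgeSet_sup]
            exact_mod_cast Set.ncard_union_le _ _
          -- |U| ≤ (1-α)|P|
          have hUr : (U.ncard : ℝ) ≤ (1 - α) * (P.ncard : ℝ) := by
            have : (U.ncard : ℝ) = (P.ncard : ℝ) - (S.ncard : ℝ) := by
              rw [hUcard, Nat.cast_sub hSle]
            rw [this]
            nlinarith [hH1s]
          have hUc : ((U.ncard : ℝ)) ^ c ≤ ρ * (P.ncard : ℝ) ^ c := by
            calc ((U.ncard : ℝ)) ^ c ≤ ((1 - α) * (P.ncard : ℝ)) ^ c :=
                  Real.rpow_le_rpow (by positivity) hUr hc.le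
              _ = ρ * (P.ncard : ℝ) ^ c := by
                  rw [Real.mul_rpow (by linarith) (by positivity)]
          have key : k * (P.ncard : ℝ) ^ c + (k / δ) * (ρ * (P.ncard : ℝ) ^ c)
              ≤ (k / δ) * (P.ncard : ℝ) ^ c := by
            have hk' : k = (k / δ) * δ := by field_simp
            nlinarith [Real.rpow_nonneg (Nat.cast_nonneg P.ncard : (0:ℝ) ≤ (P.ncard:ℝ)) c,
              div_nonneg hk.le hδ0.le]
          have step : (k / δ) * ((U.ncard : ℝ)) ^ c ≤ (k / δ) * (ρ * (P.ncard : ℝ) ^ c) :=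
            mul_le_mul_of_nonneg_left hUc (by positivity)
          calc ((H1 ⊔ H2).edgeSet.ncard : ℝ)
              ≤ (H1.edgeSet.ncard : ℝ) + (H2.edgeSet.ncard : ℝ) := hcount
            _ ≤ k * N ^ b * (P.ncard : ℝ) ^ c +
                (K * N ^ a + (k / δ) * N ^ b * ((U.ncard : ℝ)) ^ c) := by linarith
            _ ≤ K * N ^ a + (k / δ) * N ^ b * (P.ncard : ℝ) ^ c := by nlinarith
        · -- satisfaction
          intro s t hst
          by_cases hsS : (s, t) ∈ S
          · exact le_trans (gdist_anti w le_sup_left s t) hsS.2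
          · have : (s, t) ∈ U := ⟨hst, hsS⟩
            exact le_trans (gdist_anti w le_sup_right s t) (hH2s s t this)
  intro P
  obtain ⟨H, hHG, hHe, hHs⟩ := main P.ncard P le_rfl
  refine ⟨H, hHG, ?_, hHs⟩
  have hPc : 0 ≤ ((P.ncard : ℝ)) ^ c := Real.rpow_nonneg (Nat.cast_nonneg _) c
  have hkd : 0 ≤ k / δ := div_nonneg hk.le hδ0.le
  nlinarith [mul_nonneg hNb hPc, mul_nonneg hNa hkd, mul_nonneg (mul_nonneg hNb hPc) hK.le]
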